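/- For every positive integer n, ∑_{k=1}^{n} (k-1)! c(n,k) q^{k-1} = ∑_{T increasing tree on {1,...,n}} rgf_{L_T}(q), where rgf_{L_T}(q) = ∑_{S pruning of T} q^{e(S)} is the rank-generating function of the pruning lattice of T. -/

import Mathlib

open Equiv Equiv.Perm Finset Polynomial

/-- The number of cycles (orbits, including fixed points) of a permutation. -/
noncomputable def cycleCount {n : ℕ} (σ : Equiv.Perm (Fin n)) : ℕ :=
  Nat.card (Quotient (MulAction.orbitRel (Subgroup.zpowers σ) (Fin n)))

/-- The unsigned Stirling number of the first kind: the number of permutations of an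
`n`-element set with exactly `k` cycles. -/
noncomputable def stirling1 (n k : ℕ) : ℕ :=
  Nat.card {σ : Equiv.Perm (Fin n) // cycleCount σ = k}

section OrbitCount
variable {n : ℕ}

lemma univ_fin_succ : (univ : Finset (Fin (n+1))) = insert 0 (univ.image Fin.succ) := by
  ext z
  cases z using Fin.cases with
  | zero => simp
  | succ x => simp

def orbF (σ : Perm (Fin n)) (x : Fin n) : Finset (Fin n) :=
  univ.filter (σ.SameCycle x)

lemma mem_orbF {σ : Perm (Fin n)} {x y : Fin n} : y ∈ orbF σ x ↔ σ.SameCycle x y := by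
  simp [orbF]

lemma orbF_eq_iff {σ : Perm (Fin n)} {x y : Fin n} :
    orbF σ x = orbF σ y ↔ σ.SameCycle x y := by
  constructor
  · intro h
    have : y ∈ orbF σ x := h ▸ (mem_orbF.2 (SameCycle.refl σ y))
    exact mem_orbF.1 this
  · intro h
    ext z
    simp only [mem_orbF]
    exact ⟨fun hz => h.symm.trans hz, fun hz => h.trans hz⟩

lemma orbitRel_iff_sameCycle {σ : Perm (Fin n)} {x y : Fin n} :
    (MulAction.orbitRel (Subgroup.zpowers σ) (Fin n)).r x y ↔ σ.SameCycle y x := by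
  rw [MulAction.orbitRel_apply, MulAction.mem_orbit_iff]
  constructor
  · rintro ⟨⟨g, hg⟩, h⟩
    obtain ⟨i, rfl⟩ := Subgroup.mem_zpowers_iff.1 hg
    exact ⟨i, h⟩
  · rintro ⟨i, h⟩
    exact ⟨⟨σ ^ i, Subgroup.zpow_mem _ (Subgroup.mem_zpowers σ) i⟩, h⟩

lemma cycleCount_eq_card_image (σ : Perm (Fin n)) :
    cycleCount σ = (univ.image (orbF σ)).card := by
  classical
  have hwd : ∀ x y : Fin n, (MulAction.orbitRel (Subgroup.zpowers σ) (Fin n)).r x y →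
      orbF σ x = orbF σ y := fun x y h => (orbF_eq_iff.2 (orbitRel_iff_sameCycle.1 h).symm)
  let G : Quotient (MulAction.orbitRel (Subgroup.zpowers σ) (Fin n)) →
      {t // t ∈ univ.image (orbF σ)} :=
    Quotient.lift (fun x => ⟨orbF σ x, mem_image_of_mem _ (mem_univ x)⟩)
      (fun x y h => Subtype.ext (hwd x y h))
  have hbij : Function.Bijective G := by
    constructor
    · rintro ⟨x⟩ ⟨y⟩ h
      apply Quotient.sound
      exact orbitRel_iff_sameCycle.2 (orbF_eq_iff.1 (congrArg Subtype.val h)).symm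
    · rintro ⟨t, ht⟩
      obtain ⟨x, -, rfl⟩ := mem_image.1 ht
      exact ⟨Quotient.mk _ x, rfl⟩
  rw [cycleCount, Nat.card_eq_of_bijective G hbij, Nat.card_eq_finsetCard]

lemma decompose_zero_apply_succ (e : Perm (Fin n)) (x : Fin n) :
    Equiv.Perm.decomposeFin.symm (0, e) x.succ = (e x).succ := by
  rw [Equiv.Perm.decomposeFin_symm_apply_succ, Equiv.swap_self]
  rfl

lemma sameCycle_zero_iff (e : Perm (Fin n)) (z : Fin (n + 1)) :
    (Equiv.Perm.decomposeFin.symm (0, e)).SameCycle 0 z ↔ z = 0 := by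
  have h0 : Equiv.Perm.decomposeFin.symm (0, e) 0 = 0 :=
    Equiv.Perm.decomposeFin_symm_apply_zero 0 e
  constructor
  · rintro ⟨i, rfl⟩
    exact Equiv.Perm.zpow_apply_eq_self_of_apply_eq_self h0 i
  · rintro rfl; exact Equiv.Perm.SameCycle.refl _ _

lemma sameCycle_zero_succ_iff (e : Perm (Fin n)) (x y : Fin n) :
    (Equiv.Perm.decomposeFin.symm (0, e)).SameCycle x.succ y.succ ↔ e.SameCycle x y := by
  have hpow : ∀ (k : ℕ) (x : Fin n),
      ((Equiv.Perm.decomposeFin.symm (0, e) : Perm (Fin (n+1))) ^ k) x.succ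
        = ((e ^ k) x).succ := by
    intro k
    induction k with
    | zero => intro x; simp
    | succ k ih =>
        intro x
        rw [pow_succ', pow_succ', Perm.mul_apply, Perm.mul_apply, ih,
          decompose_zero_apply_succ]
  constructor
  · intro h
    obtain ⟨i, hi, hh⟩ := h.exists_pow_eq'
    rw [hpow] at hh
    exact ⟨(i : ℤ), by rw [zpow_natCast]; exact Fin.succ_injective _ hh⟩
  · intro h
    obtain ⟨i, hi, hh⟩ := h.exists_pow_eq'
    exact ⟨(i : ℤ), by rw [zpow_natCast, hpow, hh]⟩

lemma decompose_pos_apply_succ (e : Perm (Fin n)) (p' : Fin n) (x : Fin n) :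
    Equiv.Perm.decomposeFin.symm (p'.succ, e) x.succ
      = if e x = p' then 0 else (e x).succ := by
  rw [Equiv.Perm.decomposeFin_symm_apply_succ]
  by_cases h : e x = p'
  · simp [h, Equiv.swap_apply_right]
  · rw [Equiv.swap_apply_of_ne_of_ne (Fin.succ_ne_zero _)
      (fun hc => h (Fin.succ_injective _ hc)), if_neg h]

section
variable (e : Perm (Fin n)) (p' : Fin n)

def Pr (z : Fin (n + 1)) (x : Fin n) : Prop :=
  z = x.succ ∨ (z = 0 ∧ x = p')

lemma Pr_step {z : Fin (n + 1)} {x : Fin n} (h : Pr p' z x) :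
    Pr p' (Equiv.Perm.decomposeFin.symm (p'.succ, e) z) (e x)
      ∨ Pr p' (Equiv.Perm.decomposeFin.symm (p'.succ, e) z) x := by
  rcases h with rfl | ⟨rfl, rfl⟩
  · rw [decompose_pos_apply_succ]
    by_cases h : e x = p'
    · exact Or.inl (Or.inr ⟨by rw [if_pos h], h⟩)
    · exact Or.inl (Or.inl (by rw [if_neg h]))
  · right
    left
    exact Equiv.Perm.decomposeFin_symm_apply_zero _ e

lemma Pr_iter : ∀ (k : ℕ) (z : Fin (n + 1)) (x : Fin n), Pr p' z x →
    ∃ j : ℕ, Pr p' ((Equiv.Perm.decomposeFin.symm (p'.succ, e) ^ k) z) ((e ^ j) x) := by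
  intro k
  induction k with
  | zero => intro z x h; exact ⟨0, by simpa using h⟩
  | succ k ih =>
      intro z x h
      rcases Pr_step e p' h with h' | h'
      · obtain ⟨j, hj⟩ := ih _ _ h'
        refine ⟨j + 1, ?_⟩
        rw [pow_succ, pow_succ, Perm.mul_apply, Perm.mul_apply]
        exact hj
      · obtain ⟨j, hj⟩ := ih _ _ h'
        refine ⟨j, ?_⟩
        rw [pow_succ, Perm.mul_apply]
        exact hj

lemma onestep (x : Fin n) :
    (Equiv.Perm.decomposeFin.symm (p'.succ, e)).SameCycle x.succ (e x).succ := by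
  by_cases h : e x = p'
  · have h1 : (Equiv.Perm.decomposeFin.symm (p'.succ, e)).SameCycle x.succ 0 :=
      ⟨1, by rw [zpow_one, decompose_pos_apply_succ, if_pos h]⟩
    have h2 : (Equiv.Perm.decomposeFin.symm (p'.succ, e)).SameCycle 0 (e x).succ :=
      ⟨1, by rw [zpow_one, Equiv.Perm.decomposeFin_symm_apply_zero, h]⟩
    exact h1.trans h2
  · exact ⟨1, by rw [zpow_one, decompose_pos_apply_succ, if_neg h]⟩

lemma iter_back (k : ℕ) (x : Fin n) :
    (Equiv.Perm.decomposeFin.symm (p'.succ, e)).SameCycle x.succ ((e ^ k) x).succ := by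
  induction k with
  | zero => simpa using Equiv.Perm.SameCycle.refl _ _
  | succ k ih =>
      rw [pow_succ', Perm.mul_apply]
      exact ih.trans (onestep e p' ((e ^ k) x))

lemma sameCycle_succ_succ_iff_pos (x y : Fin n) :
    (Equiv.Perm.decomposeFin.symm (p'.succ, e)).SameCycle x.succ y.succ
      ↔ e.SameCycle x y := by
  constructor
  · intro h
    obtain ⟨k, hk, hh⟩ := h.exists_pow_eq'
    obtain ⟨j, hj⟩ := Pr_iter e p' k x.succ x (Or.inl rfl)
    rw [hh] at hj
    rcases hj with hj | ⟨hj, -⟩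
    · exact ⟨(j : ℤ), by rw [zpow_natCast]; exact (Fin.succ_injective _ hj).symm⟩
    · exact absurd hj (Fin.succ_ne_zero _)
  · intro h
    obtain ⟨k, hk, hh⟩ := h.exists_pow_eq'
    exact hh ▸ iter_back e p' k x

lemma sameCycle_zero_succ_iff_pos (y : Fin n) :
    (Equiv.Perm.decomposeFin.symm (p'.succ, e)).SameCycle 0 y.succ
      ↔ e.SameCycle p' y := by
  constructor
  · intro h
    obtain ⟨k, hk, hh⟩ := h.exists_pow_eq'
    obtain ⟨j, hj⟩ := Pr_iter e p' k 0 p' (Or.inr ⟨rfl, rfl⟩)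
    rw [hh] at hj
    rcases hj with hj | ⟨hj, -⟩
    · exact ⟨(j : ℤ), by rw [zpow_natCast]; exact (Fin.succ_injective _ hj).symm⟩
    · exact absurd hj (Fin.succ_ne_zero _)
  · intro h
    have h1 : (Equiv.Perm.decomposeFin.symm (p'.succ, e)).SameCycle 0 p'.succ :=
      ⟨1, by rw [zpow_one, Equiv.Perm.decomposeFin_symm_apply_zero]⟩
    obtain ⟨k, hk, hh⟩ := h.exists_pow_eq'
    exact h1.trans (hh ▸ iter_back e p' k p')

end

-- Part B
lemma orbF_decompose_zero_zero (e : Perm (Fin n)) :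
    orbF (Equiv.Perm.decomposeFin.symm (0, e)) 0 = {0} := by
  ext z
  simp [mem_orbF, sameCycle_zero_iff]

lemma orbF_decompose_zero_succ (e : Perm (Fin n)) (x : Fin n) :
    orbF (Equiv.Perm.decomposeFin.symm (0, e)) x.succ = (orbF e x).image Fin.succ := by
  ext z
  cases z using Fin.cases with
  | zero =>
      simp only [mem_orbF, mem_image]
      constructor
      · intro h
        exact absurd ((sameCycle_zero_iff e x.succ).1 h.symm) (Fin.succ_ne_zero x)
      · rintro ⟨y, -, hy⟩
        exact absurd hy (Fin.succ_ne_zero y)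
  | succ y =>
    simp only [mem_orbF, sameCycle_zero_succ_iff]
    constructor
    · intro h
      exact mem_image.2 ⟨y, mem_orbF.2 h, rfl⟩
    · intro h
      obtain ⟨w, hw, hwy⟩ := mem_image.1 h
      rw [← Fin.succ_injective _ hwy]
      exact mem_orbF.1 hw

lemma cycleCount_decompose_zero (e : Perm (Fin n)) :
    cycleCount (Equiv.Perm.decomposeFin.symm (0, e)) = cycleCount e + 1 := by
  rw [cycleCount_eq_card_image, cycleCount_eq_card_image]
  rw [univ_fin_succ, image_insert, image_image]
  have h1 : (univ.image fun x : Fin n =>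
      orbF (Equiv.Perm.decomposeFin.symm (0, e)) (Fin.succ x))
      = (univ.image (orbF e)).image (fun t => t.image Fin.succ) := by
    rw [image_image]
    exact image_congr (fun x _ => orbF_decompose_zero_succ e x)
  rw [Function.comp_def, h1, orbF_decompose_zero_zero]
  rw [card_insert_of_notMem, card_image_of_injective _
    (Finset.image_injective (Fin.succ_injective n)), add_comm]
  intro hmem
  obtain ⟨t, -, ht⟩ := mem_image.1 hmem
  have : (0 : Fin (n+1)) ∈ t.image Fin.succ := ht ▸ mem_singleton_self 0
  obtain ⟨y, -, hy⟩ := mem_image.1 this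
  exact Fin.succ_ne_zero y hy

-- p'.succ case
def mergeF (p' : Fin n) (t : Finset (Fin n)) : Finset (Fin (n+1)) :=
  if p' ∈ t then insert 0 (t.image Fin.succ) else t.image Fin.succ

lemma orbF_decompose_pos_succ (e : Perm (Fin n)) (p' : Fin n) (x : Fin n) :
    orbF (Equiv.Perm.decomposeFin.symm (p'.succ, e)) x.succ = mergeF p' (orbF e x) := by
  ext z
  have hz0 : (0 : Fin (n+1)) ∈ mergeF p' (orbF e x) ↔ p' ∈ orbF e x := by
    unfold mergeF
    by_cases h : p' ∈ orbF e x
    · simp [h]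
    · simp only [h, if_neg, if_false]
      simp only [mem_image, iff_false, not_exists]
      rintro y ⟨-, hy⟩
      exact (Fin.succ_ne_zero y hy).elim
  cases z using Fin.cases with
  | zero =>
      rw [hz0, mem_orbF]
      constructor
      · intro h
        exact mem_orbF.2 ((sameCycle_zero_succ_iff_pos e p' x).1 h.symm).symm
      · intro h
        exact ((sameCycle_zero_succ_iff_pos e p' x).2 (mem_orbF.1 h).symm).symm
  | succ y =>
      have hy : Fin.succ y ∈ mergeF p' (orbF e x) ↔ y ∈ orbF e x := by
        unfold mergeF
        have himg : Fin.succ y ∈ (orbF e x).image Fin.succ ↔ y ∈ orbF e x := by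
          simp only [mem_image]
          exact ⟨fun ⟨w, hw, hwy⟩ => (Fin.succ_injective _ hwy) ▸ hw,
            fun h => ⟨y, h, rfl⟩⟩
        by_cases h : p' ∈ orbF e x
        · simp only [h, if_true, mem_insert, himg]
          simp [Fin.succ_ne_zero y]
        · simp [h, himg]
      rw [hy, mem_orbF, sameCycle_succ_succ_iff_pos, ← mem_orbF]

lemma mergeF_injective (p' : Fin n) : Function.Injective (mergeF p') := by
  intro t1 t2 h
  have key : ∀ t : Finset (Fin n), (mergeF p' t).erase 0 = t.image Fin.succ := by
    intro t
    have h0 : (0 : Fin (n+1)) ∉ t.image Fin.succ := by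
      simp only [mem_image, not_exists]
      rintro y ⟨-, hy⟩
      exact (Fin.succ_ne_zero y hy).elim
    unfold mergeF
    by_cases hp : p' ∈ t
    · rw [if_pos hp, erase_insert h0]
    · rw [if_neg hp, erase_eq_of_notMem h0]
  have := congrArg (fun s => Finset.erase s 0) h
  simp only [key] at this
  exact Finset.image_injective (Fin.succ_injective n) this

lemma cycleCount_decompose_pos (e : Perm (Fin n)) (p' : Fin n) :
    cycleCount (Equiv.Perm.decomposeFin.symm (p'.succ, e)) = cycleCount e := by
  rw [cycleCount_eq_card_image, cycleCount_eq_card_image]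
  have h0 : orbF (Equiv.Perm.decomposeFin.symm (p'.succ, e)) 0
      = orbF (Equiv.Perm.decomposeFin.symm (p'.succ, e)) p'.succ := by
    exact orbF_eq_iff.2 ⟨1, by rw [zpow_one, Equiv.Perm.decomposeFin_symm_apply_zero]⟩
  rw [univ_fin_succ, image_insert, h0, image_image]
  have h1 : (univ.image fun x : Fin n =>
      orbF (Equiv.Perm.decomposeFin.symm (p'.succ, e)) (Fin.succ x))
      = (univ.image (orbF e)).image (mergeF p') := by
    rw [image_image]
    exact image_congr (fun x _ => orbF_decompose_pos_succ e p' x)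
  rw [Function.comp_def, h1]
  have habs : orbF (Equiv.Perm.decomposeFin.symm (p'.succ, e)) p'.succ
      ∈ (univ.image (orbF e)).image (mergeF p') := by
    rw [← h1]
    exact mem_image.2 ⟨p', mem_univ p', rfl⟩
  rw [insert_eq_self.2 habs, card_image_of_injective _ (mergeF_injective p')]

lemma cycleCount_pos (σ : Perm (Fin (n+1))) : 0 < cycleCount σ := by
  have : Nonempty (Quotient (MulAction.orbitRel (Subgroup.zpowers σ) (Fin (n+1)))) :=
    ⟨Quotient.mk _ 0⟩
  exact Nat.card_pos

noncomputable def Lpoly (m : ℕ) : Polynomial ℤ :=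
  ∑ σ : Perm (Fin (m+1)),
    Polynomial.C ((Nat.factorial (cycleCount σ - 1) : ℕ) : ℤ)
      * (Polynomial.X : Polynomial ℤ) ^ (cycleCount σ - 1)

lemma key_term (c : ℕ) (hc : 1 ≤ c) :
    (Polynomial.C ((Nat.factorial c : ℕ) : ℤ) * (X : Polynomial ℤ) ^ c)
      = X * derivative (X * (Polynomial.C ((Nat.factorial (c-1) : ℕ) : ℤ) * X ^ (c-1))) := by
  obtain ⟨d, rfl⟩ := Nat.exists_eq_add_of_le hc
  simp only [Nat.add_sub_cancel_left, Nat.succ_sub_one]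
  have h1 : (X : Polynomial ℤ) * (C ((Nat.factorial d : ℕ) : ℤ) * X ^ d)
      = C ((Nat.factorial d : ℕ) : ℤ) * X ^ (d + 1) := by ring
  rw [h1, derivative_C_mul_X_pow]
  have : (1 + d) = d + 1 := Nat.add_comm 1 d
  rw [this]
  simp only [Nat.add_sub_cancel]
  rw [Nat.factorial_succ]
  push_cast
  ring

lemma Lrec (m : ℕ) :
    Lpoly (m+1) = (m+1) • Lpoly m + X * derivative (X * Lpoly m) := by
  have hre := Equiv.sum_comp (Equiv.Perm.decomposeFin.symm :
      Fin (m+2) × Perm (Fin (m+1)) ≃ Perm (Fin (m+2)))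
    (fun σ => Polynomial.C ((Nat.factorial (cycleCount σ - 1) : ℕ) : ℤ)
      * (Polynomial.X : Polynomial ℤ) ^ (cycleCount σ - 1))
  rw [Lpoly, ← hre, Fintype.sum_prod_type]
  have hinner : ∀ e : Perm (Fin (m+1)),
      (∑ p : Fin (m+2), Polynomial.C
          ((Nat.factorial (cycleCount (Equiv.Perm.decomposeFin.symm (p, e)) - 1) : ℕ) : ℤ)
        * (X : Polynomial ℤ) ^ (cycleCount (Equiv.Perm.decomposeFin.symm (p, e)) - 1))
      = (Polynomial.C ((Nat.factorial (cycleCount e) : ℕ) : ℤ) * X ^ (cycleCount e))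
        + (m+1) • (Polynomial.C ((Nat.factorial (cycleCount e - 1) : ℕ) : ℤ)
            * X ^ (cycleCount e - 1)) := by
    intro e
    rw [show (univ : Finset (Fin (m+2))) = insert 0 (univ.image Fin.succ) from univ_fin_succ]
    rw [Finset.sum_insert (by
      simp only [mem_image, not_exists]
      rintro y ⟨-, hy⟩
      exact (Fin.succ_ne_zero y hy).elim)]
    rw [Finset.sum_image (fun x _ y _ h => Fin.succ_injective _ h)]
    congr 1
    · rw [cycleCount_decompose_zero, Nat.add_sub_cancel]
    · rw [Finset.sum_congr rfl (fun p' _ => by rw [cycleCount_decompose_pos]),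
        Finset.sum_const, Finset.card_univ, Fintype.card_fin]
  rw [Finset.sum_comm]
  rw [Finset.sum_congr rfl (fun e _ => hinner e)]
  rw [Finset.sum_add_distrib, ← Finset.smul_sum]
  have hA : (∑ e : Perm (Fin (m+1)),
      Polynomial.C ((Nat.factorial (cycleCount e) : ℕ) : ℤ) * (X : Polynomial ℤ) ^ (cycleCount e))
      = X * derivative (X * Lpoly m) := by
    rw [Finset.sum_congr rfl (fun e _ => key_term (cycleCount e) (cycleCount_pos e))]
    rw [Lpoly, Finset.mul_sum, map_sum, Finset.mul_sum]
  rw [hA, add_comm]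
  rfl

end OrbitCount

section Tree
variable {m : ℕ}

def trunc (m : ℕ) (z : Fin (m+2)) : Fin (m+1) := ⟨z.val % (m+1), Nat.mod_lt _ (Nat.succ_pos m)⟩

def pdown (p : Fin (m+2) → Fin (m+2)) : Fin (m+1) → Fin (m+1) := fun i => trunc m (p i.castSucc)

def pup (p₀ : Fin (m+1) → Fin (m+1)) (c : Fin (m+1)) : Fin (m+2) → Fin (m+2) :=
  fun z => if z = Fin.last (m+1) then c.castSucc else (p₀ (trunc m z)).castSucc

def sdown (S : Finset (Fin (m+2))) : Finset (Fin (m+1)) :=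
  univ.filter (fun c => c.castSucc ∈ S)

def supF (S₀ : Finset (Fin (m+1))) (b : Bool) : Finset (Fin (m+2)) :=
  if b then insert (Fin.last (m+1)) (S₀.image Fin.castSucc) else S₀.image Fin.castSucc

lemma trunc_castSucc (c : Fin (m+1)) : trunc m c.castSucc = c := by
  apply Fin.ext
  simp [trunc, Nat.mod_eq_of_lt c.isLt]

lemma castSucc_trunc {z : Fin (m+2)} (h : z ≠ Fin.last (m+1)) :
    (trunc m z).castSucc = z := by
  apply Fin.ext
  have hz : z.val ≠ m + 1 := fun hh => h (Fin.ext hh)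
  have hlt : z.val < m + 1 := by have := z.isLt; omega
  simp [trunc, Nat.mod_eq_of_lt hlt]

lemma trunc_zero : trunc m 0 = 0 := by
  apply Fin.ext; simp [trunc]

lemma castSucc_eq_zero_iff' (c : Fin (m+1)) : c.castSucc = 0 ↔ c = 0 := by
  rw [Fin.ext_iff, Fin.ext_iff]; simp

lemma last_ne_zero' : (Fin.last (m+1)) ≠ 0 := by
  intro h
  have := congrArg Fin.val h
  simp at this

lemma pdown_good {p : Fin (m+2) → Fin (m+2)}
    (h1 : p 0 = 0) (h2 : ∀ i : Fin (m+2), i ≠ 0 → p i < i) :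
    pdown p 0 = 0 ∧ ∀ i : Fin (m+1), i ≠ 0 → pdown p i < i := by
  constructor
  · unfold pdown
    rw [show ((0 : Fin (m+1)).castSucc) = 0 from Fin.ext (by simp), h1, trunc_zero]
  · intro i hi
    unfold pdown
    have hic : (i.castSucc : Fin (m+2)) ≠ 0 := by
      intro hh; exact hi ((castSucc_eq_zero_iff' i).1 hh)
    have hlt := h2 i.castSucc hic
    have hv : (p i.castSucc).val < i.val := by
      simpa [Fin.lt_def] using hlt
    rw [Fin.lt_def]
    show (p i.castSucc).val % (m+1) < i.val
    rw [Nat.mod_eq_of_lt (lt_of_lt_of_le hv (by omega))]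
    exact hv

lemma pup_good {p₀ : Fin (m+1) → Fin (m+1)} {c : Fin (m+1)}
    (h1 : p₀ 0 = 0) (h2 : ∀ i : Fin (m+1), i ≠ 0 → p₀ i < i) :
    pup p₀ c 0 = 0 ∧ ∀ i : Fin (m+2), i ≠ 0 → pup p₀ c i < i := by
  constructor
  · unfold pup
    rw [if_neg (Ne.symm last_ne_zero'), trunc_zero, h1]
    exact Fin.ext (by simp)
  · intro z hz
    unfold pup
    by_cases h : z = Fin.last (m+1)
    · rw [if_pos h, h]
      exact Fin.castSucc_lt_last c
    · rw [if_neg h]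
      have htz : trunc m z ≠ 0 := by
        intro hh
        apply hz
        rw [← castSucc_trunc h, hh, Fin.castSucc_zero]
      have := h2 (trunc m z) htz
      calc (p₀ (trunc m z)).castSucc < (trunc m z).castSucc :=
              Fin.castSucc_lt_castSucc_iff.2 this
        _ = z := castSucc_trunc h

lemma castSucc_ne_last (c : Fin (m+1)) : c.castSucc ≠ Fin.last (m+1) :=
  ne_of_lt (Fin.castSucc_lt_last c)

lemma mem_image_castSucc {S₀ : Finset (Fin (m+1))} {z : Fin (m+2)} (hz : z ≠ Fin.last (m+1)) :
    z ∈ S₀.image Fin.castSucc ↔ trunc m z ∈ S₀ := by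
  rw [mem_image]
  constructor
  · rintro ⟨d, hd, rfl⟩
    rwa [trunc_castSucc]
  · intro h
    exact ⟨trunc m z, h, castSucc_trunc hz⟩

lemma zero_not_mem_image_castSucc {S₀ : Finset (Fin (m+1))} (h0 : 0 ∉ S₀) :
    (0 : Fin (m+2)) ∉ S₀.image Fin.castSucc := by
  rw [mem_image_castSucc (Ne.symm last_ne_zero'), trunc_zero]
  exact h0

lemma last_not_mem_image_castSucc (S₀ : Finset (Fin (m+1))) :
    Fin.last (m+1) ∉ S₀.image Fin.castSucc := by
  rw [mem_image]
  rintro ⟨d, -, hd⟩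
  exact castSucc_ne_last d hd

lemma sdown_good {p : Fin (m+2) → Fin (m+2)} {S : Finset (Fin (m+2))}
    (hp2 : ∀ i : Fin (m+2), i ≠ 0 → p i < i)
    (hS1 : 0 ∉ S) (hS2 : ∀ i ∈ S, p i ≠ 0 → p i ∈ S) :
    0 ∉ sdown S ∧ ∀ c ∈ sdown S, pdown p c ≠ 0 → pdown p c ∈ sdown S := by
  constructor
  · rw [sdown, mem_filter, Fin.castSucc_zero]
    rintro ⟨-, h⟩
    exact hS1 h
  · intro c hc hne
    rw [sdown, mem_filter] at hc
    have hcS : c.castSucc ∈ S := hc.2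
    have hc0 : c ≠ 0 := by
      rintro rfl
      rw [Fin.castSucc_zero] at hcS
      exact hS1 hcS
    have hcc0 : (c.castSucc : Fin (m+2)) ≠ 0 := by
      intro hh; exact hc0 ((castSucc_eq_zero_iff' c).1 hh)
    have hlt : p c.castSucc < c.castSucc := hp2 c.castSucc hcc0
    have hnl : p c.castSucc ≠ Fin.last (m+1) :=
      ne_of_lt (lt_of_lt_of_le hlt (Fin.le_last _))
    have hkey : (pdown p c).castSucc = p c.castSucc := castSucc_trunc hnl
    have hpne : p c.castSucc ≠ 0 := by
      intro hh
      apply hne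
      unfold pdown
      rw [hh, trunc_zero]
    have := hS2 c.castSucc hcS hpne
    rw [sdown, mem_filter]
    exact ⟨mem_univ _, hkey ▸ this⟩

lemma sup_good {p₀ : Fin (m+1) → Fin (m+1)} {c : Fin (m+1)} {S₀ : Finset (Fin (m+1))} {b : Bool}
    (hp₀2 : ∀ i : Fin (m+1), i ≠ 0 → p₀ i < i)
    (hS₀1 : 0 ∉ S₀) (hS₀2 : ∀ i ∈ S₀, p₀ i ≠ 0 → p₀ i ∈ S₀)
    (hc : b = true → c = 0 ∨ c ∈ S₀) :
    0 ∉ supF S₀ b ∧ ∀ z ∈ supF S₀ b, pup p₀ c z ≠ 0 → pup p₀ c z ∈ supF S₀ b := by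
  have himgsub : S₀.image Fin.castSucc ⊆ supF S₀ b := by
    cases b
    · exact subset_of_eq rfl
    · exact subset_insert _ _
  constructor
  · cases b
    · exact zero_not_mem_image_castSucc hS₀1
    · rw [supF, if_pos rfl, mem_insert]
      rintro (h | h)
      · exact last_ne_zero' h.symm
      · exact zero_not_mem_image_castSucc hS₀1 h
  · intro z hz hne
    have hmain : ∀ d ∈ S₀, pup p₀ c d.castSucc ≠ 0 → pup p₀ c d.castSucc ∈ supF S₀ b := by
      intro d hd hne'
      have h1 : pup p₀ c d.castSucc = (p₀ d).castSucc := by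
        rw [pup, if_neg (castSucc_ne_last d), trunc_castSucc]
      rw [h1] at hne' ⊢
      have hpd0 : p₀ d ≠ 0 := by
        intro hh; rw [hh, Fin.castSucc_zero] at hne'; exact hne' rfl
      exact himgsub (mem_image_of_mem _ (hS₀2 d hd hpd0))
    cases b with
    | false =>
        rw [supF, if_neg (by simp)] at hz
        obtain ⟨d, hd, rfl⟩ := mem_image.1 hz
        exact hmain d hd hne
    | true =>
        rw [supF, if_pos rfl, mem_insert] at hz
        rcases hz with rfl | hz
        · have h1 : pup p₀ c (Fin.last (m+1)) = c.castSucc := by rw [pup, if_pos rfl]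
          rw [h1] at hne ⊢
          have hc0 : c ≠ 0 := fun hh => hne (by rw [hh, Fin.castSucc_zero])
          rcases hc rfl with hh | hh
          · exact absurd hh hc0
          · exact himgsub (mem_image_of_mem _ hh)
        · obtain ⟨d, hd, rfl⟩ := mem_image.1 hz
          exact hmain d hd hne

lemma pdown_pup (p₀ : Fin (m+1) → Fin (m+1)) (c : Fin (m+1)) : pdown (pup p₀ c) = p₀ := by
  funext i
  rw [pdown, pup, if_neg (castSucc_ne_last i), trunc_castSucc, trunc_castSucc]

lemma pup_last (p₀ : Fin (m+1) → Fin (m+1)) (c : Fin (m+1)) :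
    pup p₀ c (Fin.last (m+1)) = c.castSucc := by rw [pup, if_pos rfl]

lemma pup_pdown {p : Fin (m+2) → Fin (m+2)}
    (h1 : p 0 = 0) (h2 : ∀ i : Fin (m+2), i ≠ 0 → p i < i) :
    pup (pdown p) (trunc m (p (Fin.last (m+1)))) = p := by
  funext z
  by_cases h : z = Fin.last (m+1)
  · subst h
    rw [pup_last]
    have : p (Fin.last (m+1)) ≠ Fin.last (m+1) :=
      ne_of_lt (h2 _ last_ne_zero')
    exact castSucc_trunc this
  · rw [pup, if_neg h, pdown, castSucc_trunc h]
    have hne : p z ≠ Fin.last (m+1) := by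
      by_cases hz : z = 0
      · subst hz; rw [h1]; exact Ne.symm last_ne_zero'
      · exact ne_of_lt (lt_of_lt_of_le (h2 z hz) (Fin.le_last z))
    exact castSucc_trunc hne

lemma sdown_supF (S₀ : Finset (Fin (m+1))) (b : Bool) : sdown (supF S₀ b) = S₀ := by
  ext c
  rw [sdown, mem_filter]
  have himg : c.castSucc ∈ S₀.image Fin.castSucc ↔ c ∈ S₀ := by
    rw [mem_image_castSucc (castSucc_ne_last c), trunc_castSucc]
  cases b
  · rw [supF, if_neg (by simp)]
    simp [himg]
  · rw [supF, if_pos rfl]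
    simp only [mem_insert, himg]
    constructor
    · rintro ⟨-, (h | h)⟩
      · exact absurd h (castSucc_ne_last c)
      · exact h
    · intro h; exact ⟨mem_univ _, Or.inr h⟩

lemma supF_sdown {S : Finset (Fin (m+2))} :
    supF (sdown S) (if Fin.last (m+1) ∈ S then true else false) = S := by
  ext z
  by_cases hlast : Fin.last (m+1) ∈ S
  · rw [if_pos hlast, supF, if_pos rfl, mem_insert]
    by_cases hz : z = Fin.last (m+1)
    · subst hz; simp [hlast]
    · rw [mem_image_castSucc hz]
      rw [sdown, mem_filter, castSucc_trunc hz]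
      simp [hz, mem_univ]
  · rw [if_neg hlast, supF, if_neg (by simp)]
    by_cases hz : z = Fin.last (m+1)
    · subst hz
      simp only [last_not_mem_image_castSucc, false_iff]
      exact hlast
    · rw [mem_image_castSucc hz, sdown, mem_filter, castSucc_trunc hz]
      simp

lemma card_supF (S₀ : Finset (Fin (m+1))) (b : Bool) :
    (supF S₀ b).card = S₀.card + (if b then 1 else 0) := by
  cases b
  · rw [supF, if_neg (by simp), if_neg (by simp), add_zero,
      card_image_of_injective _ (Fin.castSucc_injective (m+1))]
  · rw [supF, if_pos rfl, if_pos rfl,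
      card_insert_of_notMem (last_not_mem_image_castSucc S₀),
      card_image_of_injective _ (Fin.castSucc_injective (m+1))]

noncomputable def Rpoly (m : ℕ) : Polynomial ℤ :=
  ∑ p ∈ Finset.univ.filter (fun p : Fin (m+1) → Fin (m+1) =>
        p 0 = 0 ∧ ∀ i : Fin (m+1), i ≠ 0 → p i < i),
      ∑ S ∈ Finset.univ.filter (fun S : Finset (Fin (m+1)) =>
          (0 : Fin (m+1)) ∉ S ∧ ∀ i ∈ S, p i ≠ 0 → p i ∈ S),
        (Polynomial.X : Polynomial ℤ) ^ S.card

def DD (m : ℕ) : Finset (Σ _ : Fin (m+1) → Fin (m+1), Finset (Fin (m+1))) :=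
  (Finset.univ.filter (fun p : Fin (m+1) → Fin (m+1) =>
        p 0 = 0 ∧ ∀ i : Fin (m+1), i ≠ 0 → p i < i)).sigma
    (fun p => Finset.univ.filter (fun S : Finset (Fin (m+1)) =>
          (0 : Fin (m+1)) ∉ S ∧ ∀ i ∈ S, p i ≠ 0 → p i ∈ S))

lemma Rpoly_eq (m : ℕ) : Rpoly m = ∑ x ∈ DD m, (X : Polynomial ℤ) ^ x.2.card := by
  rw [Rpoly, DD, Finset.sum_sigma]

def EE (m : ℕ) : Finset (Σ _ : (Σ _ : Fin (m+1) → Fin (m+1), Finset (Fin (m+1))),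
    Fin (m+1) ⊕ Fin (m+1)) :=
  (DD m).sigma (fun q => (Finset.univ : Finset (Fin (m+1))).disjSum (insert (0 : Fin (m+1)) q.2))

noncomputable def ww {m : ℕ} (y : Σ _ : (Σ _ : Fin (m+1) → Fin (m+1), Finset (Fin (m+1))),
    Fin (m+1) ⊕ Fin (m+1)) : Polynomial ℤ :=
  (X : Polynomial ℤ) ^ (y.1.2.card + (Sum.elim (fun _ => 0) (fun _ => 1) y.2))

lemma step1 (m : ℕ) :
    (∑ x ∈ DD (m+1), (X : Polynomial ℤ) ^ x.2.card) = ∑ y ∈ EE m, ww y := by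
  refine Finset.sum_bij'
    (fun x _ => (⟨⟨pdown x.1, sdown x.2⟩,
        if Fin.last (m+1) ∈ x.2 then Sum.inr (trunc m (x.1 (Fin.last (m+1))))
        else Sum.inl (trunc m (x.1 (Fin.last (m+1))))⟩ :
        Σ _ : (Σ _ : Fin (m+1) → Fin (m+1), Finset (Fin (m+1))), Fin (m+1) ⊕ Fin (m+1)))
    (fun y _ => (⟨pup y.1.1 (Sum.elim id id y.2),
        supF y.1.2 (Sum.elim (fun _ => false) (fun _ => true) y.2)⟩ :
        Σ _ : Fin (m+2) → Fin (m+2), Finset (Fin (m+2))))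
    ?_ ?_ ?_ ?_ ?_
  · -- hi : image in EE m
    rintro ⟨p, S⟩ hx
    rw [DD, Finset.mem_sigma, mem_filter, mem_filter] at hx
    obtain ⟨⟨-, hp1, hp2⟩, -, hS1, hS2⟩ := hx
    rw [EE, Finset.mem_sigma]
    dsimp only
    constructor
    · rw [DD, Finset.mem_sigma, mem_filter, mem_filter]
      have hpd := pdown_good hp1 hp2
      have hsd := sdown_good hp2 hS1 hS2
      exact ⟨⟨mem_univ _, hpd⟩, mem_univ _, hsd⟩
    · by_cases hlast : Fin.last (m+1) ∈ S
      · rw [if_pos hlast, Finset.inr_mem_disjSum]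
        by_cases hp0 : p (Fin.last (m+1)) = 0
        · rw [hp0, trunc_zero]
          exact mem_insert_self _ _
        · apply mem_insert_of_mem
          rw [sdown, mem_filter]
          refine ⟨mem_univ _, ?_⟩
          have hplt : p (Fin.last (m+1)) < Fin.last (m+1) := hp2 _ last_ne_zero'
          rw [castSucc_trunc (ne_of_lt hplt)]
          exact hS2 _ hlast hp0
      · rw [if_neg hlast, Finset.inl_mem_disjSum]
        exact mem_univ _
  · -- hj : image in DD (m+1)
    rintro ⟨⟨p₀, S₀⟩, ch⟩ hy
    rw [EE, Finset.mem_sigma, DD, Finset.mem_sigma, mem_filter, mem_filter] at hy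
    obtain ⟨⟨⟨-, hp1, hp2⟩, -, hS1, hS2⟩, hch⟩ := hy
    rw [DD, Finset.mem_sigma, mem_filter, mem_filter]
    have hpu := pup_good (c := Sum.elim id id ch) hp1 hp2
    refine ⟨⟨mem_univ _, hpu⟩, mem_univ _, ?_⟩
    apply sup_good hp2 hS1 hS2
    intro hb
    cases ch with
    | inl c => simp at hb
    | inr c =>
        rw [Finset.inr_mem_disjSum] at hch
        simpa using (mem_insert.1 hch)
  · -- left_inv
    rintro ⟨p, S⟩ hx
    rw [DD, Finset.mem_sigma, mem_filter, mem_filter] at hx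
    obtain ⟨⟨-, hp1, hp2⟩, -, hS1, hS2⟩ := hx
    by_cases hlast : Fin.last (m+1) ∈ S
    · simp only [if_pos hlast, Sum.elim_inr, Sum.elim_inl, id]
      have h1 := pup_pdown hp1 hp2
      have h2 : supF (sdown S) true = S := by
        have := @supF_sdown m S
        rwa [if_pos hlast] at this
      simp only [h1, h2]
    · simp only [if_neg hlast, Sum.elim_inl, id]
      have h1 := pup_pdown hp1 hp2
      have h2 : supF (sdown S) false = S := by
        have := @supF_sdown m S
        rwa [if_neg hlast] at this
      simp only [h1, h2]
  · -- right_inv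
    rintro ⟨⟨p₀, S₀⟩, ch⟩ hy
    cases ch with
    | inl c =>
        simp only [Sum.elim_inl, id]
        have hlast : Fin.last (m+1) ∉ supF S₀ false := by
          rw [supF, if_neg (by simp)]
          exact last_not_mem_image_castSucc S₀
        simp only [if_neg hlast, pdown_pup, sdown_supF, pup_last, trunc_castSucc]
    | inr c =>
        simp only [Sum.elim_inr, id]
        have hlast : Fin.last (m+1) ∈ supF S₀ true := by
          rw [supF, if_pos rfl]; exact mem_insert_self _ _
        simp only [if_pos hlast, pdown_pup, sdown_supF, pup_last, trunc_castSucc]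
  · -- weights
    rintro ⟨p, S⟩ hx
    rw [DD, Finset.mem_sigma, mem_filter, mem_filter] at hx
    obtain ⟨⟨-, hp1, hp2⟩, -, hS1, hS2⟩ := hx
    by_cases hlast : Fin.last (m+1) ∈ S
    · simp only [ww, if_pos hlast, Sum.elim_inr]
      congr 1
      have h2 : supF (sdown S) true = S := by
        have := @supF_sdown m S
        rwa [if_pos hlast] at this
      conv_lhs => rw [← h2]
      rw [card_supF, if_pos rfl]
    · simp only [ww, if_neg hlast, Sum.elim_inl]
      congr 1
      have h2 : supF (sdown S) false = S := by
        have := @supF_sdown m S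
        rwa [if_neg hlast] at this
      conv_lhs => rw [← h2]
      rw [card_supF, if_neg (by simp), add_zero]

lemma step2 (m : ℕ) :
    (∑ y ∈ EE m, ww y)
      = ∑ q ∈ DD m, ((m+1) • (X : Polynomial ℤ) ^ q.2.card
          + (q.2.card + 1) • (X : Polynomial ℤ) ^ (q.2.card + 1)) := by
  rw [EE, Finset.sum_sigma]
  refine Finset.sum_congr rfl (fun q hq => ?_)
  have h0 : (0 : Fin (m+1)) ∉ q.2 := by
    rw [DD, Finset.mem_sigma, mem_filter] at hq
    exact ((mem_filter.1 hq.2).2).1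
  rw [Finset.sum_disjSum]
  congr 1
  · rw [Finset.sum_congr rfl (fun c _ => by
      show ww ⟨q, Sum.inl c⟩ = (X : Polynomial ℤ) ^ q.2.card
      simp [ww]), Finset.sum_const, card_univ, Fintype.card_fin]
  · rw [Finset.sum_congr rfl (fun c _ => by
      show ww ⟨q, Sum.inr c⟩ = (X : Polynomial ℤ) ^ (q.2.card + 1)
      simp [ww]), Finset.sum_const, card_insert_of_notMem h0]

lemma keyS (s : ℕ) : ((s+1) • ((X : Polynomial ℤ) ^ (s+1)))
    = X * derivative (X * X ^ s) := by
  have h1 : (X : Polynomial ℤ) * X ^ s = X ^ (s + 1) := (pow_succ' X s).symm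
  rw [h1, derivative_X_pow]
  simp only [Nat.add_sub_cancel]
  rw [Polynomial.C_eq_natCast, nsmul_eq_mul, ← h1]
  ring

lemma Rrec (m : ℕ) :
    Rpoly (m+1) = (m+1) • Rpoly m + X * derivative (X * Rpoly m) := by
  rw [Rpoly_eq (m+1), step1, step2, Finset.sum_add_distrib, ← Finset.smul_sum]
  have hA : (∑ q ∈ DD m, (q.2.card + 1) • (X : Polynomial ℤ) ^ (q.2.card + 1))
      = X * derivative (X * Rpoly m) := by
    rw [Finset.sum_congr rfl (fun q _ => keyS q.2.card)]
    rw [Rpoly_eq m, Finset.mul_sum, map_sum, Finset.mul_sum]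
  rw [hA, Rpoly_eq m]

end Tree

-- base cases
lemma cycleCount_one_dim : ∀ σ : Perm (Fin 1), cycleCount σ = 1 := by
  intro σ
  rw [cycleCount]
  haveI hsub : Subsingleton (Quotient (MulAction.orbitRel (Subgroup.zpowers σ) (Fin 1))) := by
    constructor
    intro a b
    induction a using Quotient.ind
    induction b using Quotient.ind
    exact congrArg _ (Subsingleton.elim _ _)
  haveI : Nonempty (Quotient (MulAction.orbitRel (Subgroup.zpowers σ) (Fin 1))) :=
    ⟨Quotient.mk _ 0⟩
  exact Nat.card_unique

lemma Lpoly_zero : Lpoly 0 = 1 := by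
  haveI : Unique (Perm (Fin 1)) :=
    { default := 1, uniq := fun σ => Equiv.ext fun x => Subsingleton.elim _ _ }
  rw [Lpoly, Fintype.sum_unique]
  rw [cycleCount_one_dim]
  simp

lemma Rpoly_zero : Rpoly 0 = 1 := by
  rw [Rpoly]
  have hP : (Finset.univ.filter (fun p : Fin 1 → Fin 1 =>
      p 0 = 0 ∧ ∀ i : Fin 1, i ≠ 0 → p i < i)) = {fun _ => 0} := by
    ext p
    simp only [mem_filter, mem_univ, true_and, mem_singleton]
    constructor
    · intro _
      funext i
      exact Fin.fin_one_eq_zero _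
    · rintro rfl
      exact ⟨rfl, fun i hi => absurd (Fin.fin_one_eq_zero i) hi⟩
  rw [hP, Finset.sum_singleton]
  have hS : (Finset.univ.filter (fun S : Finset (Fin 1) =>
      (0 : Fin 1) ∉ S ∧ ∀ i ∈ S, (fun _ : Fin 1 => (0 : Fin 1)) i ≠ 0 → (fun _ : Fin 1 => (0 : Fin 1)) i ∈ S)) = {∅} := by
    ext S
    simp only [mem_filter, mem_univ, true_and, mem_singleton]
    constructor
    · rintro ⟨h0, -⟩
      rw [Finset.eq_empty_iff_forall_notMem]
      intro x hx
      rw [Fin.fin_one_eq_zero x] at hx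
      exact h0 hx
    · rintro rfl
      exact ⟨notMem_empty _, fun i hi => absurd hi (notMem_empty _)⟩
  rw [hS, Finset.sum_singleton, Finset.card_empty, pow_zero]

lemma LR (m : ℕ) : Lpoly m = Rpoly m := by
  induction m with
  | zero => rw [Lpoly_zero, Rpoly_zero]
  | succ m ih => rw [Lrec, Rrec, ih]

/-- `∑_{k=1}^n (k-1)! c(n,k) q^{k-1} = ∑_{T increasing tree on {1,…,n}} rgf_{L_T}(q)`,
where increasing trees are encoded by parent functions `p` with `p i < i` for non-root
vertices, and `rgf_{L_T}(q) = ∑_{S pruning of T} q^{#edges(S)}`, the sum being over sets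
`S` of non-root vertices closed under taking (non-root) parents. -/
theorem stmt18 (n : ℕ) (hn : 0 < n) :
    (∑ k ∈ Finset.Icc 1 n,
        Polynomial.C ((Nat.factorial (k - 1) * stirling1 n k : ℕ) : ℤ)
          * (Polynomial.X : Polynomial ℤ) ^ (k - 1))
      = ∑ p ∈ Finset.univ.filter (fun p : Fin n → Fin n =>
            p ⟨0, hn⟩ = ⟨0, hn⟩ ∧ ∀ i : Fin n, i ≠ ⟨0, hn⟩ → p i < i),
          ∑ S ∈ Finset.univ.filter (fun S : Finset (Fin n) =>
              (⟨0, hn⟩ : Fin n) ∉ S ∧ ∀ i ∈ S, p i ≠ ⟨0, hn⟩ → p i ∈ S),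
            (Polynomial.X : Polynomial ℤ) ^ S.card := by
  obtain ⟨m, rfl⟩ : ∃ m, n = m + 1 := ⟨n - 1, by omega⟩
  have h00 : (⟨0, hn⟩ : Fin (m+1)) = 0 := Fin.ext (by simp)
  have hL : (∑ k ∈ Finset.Icc 1 (m+1),
      Polynomial.C ((Nat.factorial (k - 1) * stirling1 (m+1) k : ℕ) : ℤ)
        * (Polynomial.X : Polynomial ℤ) ^ (k - 1)) = Lpoly m := by
    rw [Lpoly, Finset.sum_comp
      (fun k => Polynomial.C (((k-1).factorial : ℕ) : ℤ) * (X : Polynomial ℤ) ^ (k-1))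
      cycleCount]
    have himg : (univ.image (cycleCount : Perm (Fin (m+1)) → ℕ)) ⊆ Finset.Icc 1 (m+1) := by
      intro k hk
      obtain ⟨σ, -, rfl⟩ := mem_image.1 hk
      rw [Finset.mem_Icc]
      refine ⟨cycleCount_pos σ, ?_⟩
      have hs : Function.Surjective
          (Quotient.mk (MulAction.orbitRel (Subgroup.zpowers σ) (Fin (m+1)))) := by
        intro q; induction q using Quotient.ind; exact ⟨_, rfl⟩
      have := Nat.card_le_card_of_surjective _ hs
      rwa [Nat.card_eq_fintype_card (α := Fin (m+1)), Fintype.card_fin] at this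
    have hterm : ∀ k ∈ Finset.Icc 1 (m+1),
        Polynomial.C ((Nat.factorial (k - 1) * stirling1 (m+1) k : ℕ) : ℤ)
            * (Polynomial.X : Polynomial ℤ) ^ (k - 1)
          = (univ.filter fun σ : Perm (Fin (m+1)) => cycleCount σ = k).card
              • (Polynomial.C (((k-1).factorial : ℕ) : ℤ) * (X : Polynomial ℤ) ^ (k-1)) := by
      intro k _
      have hst : stirling1 (m+1) k
          = (univ.filter fun σ : Perm (Fin (m+1)) => cycleCount σ = k).card := by
        rw [stirling1, Nat.card_eq_fintype_card, Fintype.card_subtype]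
      rw [hst, nsmul_eq_mul, Nat.cast_mul, map_mul, ← Polynomial.C_eq_natCast]
      push_cast
      ring
    rw [Finset.sum_congr rfl hterm]
    exact (Finset.sum_subset himg (fun k _ hk => by
      have hcard : (univ.filter fun σ : Perm (Fin (m+1)) => cycleCount σ = k).card = 0 := by
        rw [Finset.card_eq_zero, Finset.filter_eq_empty_iff]
        intro σ _
        exact fun hh => hk (mem_image.2 ⟨σ, mem_univ σ, hh⟩)
      rw [hcard, zero_smul])).symm
  rw [hL, LR, Rpoly]
  simp only [h00]
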